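/- In Weispfenning's example with parameters u, v and variables x, y, z, lexicographic monomial order with z > y > x, let f = u·y + x, g = v·z + x + 1, h = v·z − u·y + 1 in P and I = Ideal.span {f, g}. Then {f, h} is NOT a comprehensive Gröbner basis of I: for the parameter assignment v̄ sending u ↦ 1 and v ↦ 0, σ_{v̄}(g) = x + 1 is a nonzero element of Ideal.map σ_{v̄} I with leading monomial x, while σ_{v̄}(f) = y + x and σ_{v̄}(h) = −y + 1 both have leading monomial y, which does not divide x. Hence g is essential in the CGB {f, g, h}, and combined with the essentiality of f and h, {f, g, h} is a minimal CGB of I. -/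

import Mathlib

open MvPolynomial

/-- The leading monomial (`m.degree`) of a multivariate polynomial w.r.t. a monomial order. -/
noncomputable def mdeg {σ R : Type*} [CommSemiring R] (m : MonomialOrder σ)
    (p : MvPolynomial σ R) : σ →₀ ℕ :=
  m.toSyn.symm (p.support.sup fun s => m.toSyn s)

/-- `H` is a Gröbner basis of the ideal `J`. -/
def IsGroebnerBasis {σ F : Type*} [Field F] (m : MonomialOrder σ)
    (J : Ideal (MvPolynomial σ F)) (H : Set (MvPolynomial σ F)) : Prop :=
  H ⊆ (J : Set (MvPolynomial σ F)) ∧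
    ∀ p ∈ J, p ≠ 0 → ∃ h ∈ H, h ≠ 0 ∧ mdeg m h ≤ mdeg m p

/-- Specialization of the parameters at `v : U → L`. -/
noncomputable def paramSpec {K L U X : Type*} [CommSemiring K] [CommSemiring L]
    [Algebra K L] (v : U → L) :
    MvPolynomial X (MvPolynomial U K) →+* MvPolynomial X L :=
  MvPolynomial.map ((MvPolynomial.aeval v : MvPolynomial U K →ₐ[K] L) : MvPolynomial U K →+* L)

/-- `G` is a comprehensive Gröbner basis of `I` on the set `A` of parameter assignments. -/
def IsCGBOn {K U X : Type*} (L : Type*) [Field K] [Field L] [Algebra K L]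
    (m : MonomialOrder X) (I : Ideal (MvPolynomial X (MvPolynomial U K)))
    (A : Set (U → L)) (G : Set (MvPolynomial X (MvPolynomial U K))) : Prop :=
  G.Finite ∧ G ⊆ (I : Set (MvPolynomial X (MvPolynomial U K))) ∧
    ∀ v ∈ A, IsGroebnerBasis m (I.map (paramSpec (L := L) v))
      (paramSpec (L := L) v '' G)

/-- `G` is a comprehensive Gröbner basis of `I`. -/
def IsCGB {K U X : Type*} (L : Type*) [Field K] [Field L] [Algebra K L]
    (m : MonomialOrder X) (I : Ideal (MvPolynomial X (MvPolynomial U K)))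
    (G : Set (MvPolynomial X (MvPolynomial U K))) : Prop :=
  G.Finite ∧ G ⊆ (I : Set (MvPolynomial X (MvPolynomial U K))) ∧
    ∀ v : U → L, IsGroebnerBasis m (I.map (paramSpec (L := L) v))
      (paramSpec (L := L) v '' G)

namespace Weispfenning

/-- Variables: `z = X 0 > y = X 1 > x = X 2` under the lexicographic order. -/
noncomputable abbrev m3 : MonomialOrder (Fin 3) := MonomialOrder.lex

variable (K : Type*) [Field K]

/-- `f = u·y + x`. -/
noncomputable def f : MvPolynomial (Fin 3) (MvPolynomial (Fin 2) K) :=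
  MvPolynomial.C (MvPolynomial.X 0) * MvPolynomial.X 1 + MvPolynomial.X 2

/-- `g = v·z + x + 1`. -/
noncomputable def g : MvPolynomial (Fin 3) (MvPolynomial (Fin 2) K) :=
  MvPolynomial.C (MvPolynomial.X 1) * MvPolynomial.X 0 + MvPolynomial.X 2 + 1

/-- `h = v·z - u·y + 1`. -/
noncomputable def h : MvPolynomial (Fin 3) (MvPolynomial (Fin 2) K) :=
  MvPolynomial.C (MvPolynomial.X 1) * MvPolynomial.X 0
    - MvPolynomial.C (MvPolynomial.X 0) * MvPolynomial.X 1 + 1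

/-- `I = ⟨f, g⟩`. -/
noncomputable def I : Ideal (MvPolynomial (Fin 3) (MvPolynomial (Fin 2) K)) :=
  Ideal.span {f K, g K}

end Weispfenning


section Helpers

open MvPolynomial Finsupp Weispfenning

-- ## Generic facts about `mdeg`

lemma le_mdeg {σ R : Type*} [CommSemiring R] (m : MonomialOrder σ)
    {p : MvPolynomial σ R} {e : σ →₀ ℕ}
    (he : MvPolynomial.coeff e p ≠ 0) : m.toSyn e ≤ m.toSyn (mdeg m p) := by
  rw [mdeg, AddEquiv.apply_symm_apply]
  exact Finset.le_sup (MvPolynomial.mem_support_iff.2 he)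

lemma coeff_mdeg_ne_zero {σ R : Type*} [CommSemiring R] (m : MonomialOrder σ)
    {p : MvPolynomial σ R} (hp : p ≠ 0) :
    MvPolynomial.coeff (mdeg m p) p ≠ 0 := by
  obtain ⟨e, he, hsup⟩ := Finset.exists_mem_eq_sup p.support
    (MvPolynomial.support_nonempty.2 hp) (fun s => m.toSyn s)
  have : mdeg m p = e := by rw [mdeg, hsup, AddEquiv.symm_apply_apply]
  rw [this]
  exact MvPolynomial.mem_support_iff.1 he

lemma mdeg_eq_of_max {σ R : Type*} [CommSemiring R] (m : MonomialOrder σ)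
    {p : MvPolynomial σ R} {d : σ →₀ ℕ}
    (hd : MvPolynomial.coeff d p ≠ 0)
    (h : ∀ e, MvPolynomial.coeff e p ≠ 0 → m.toSyn e ≤ m.toSyn d) : mdeg m p = d := by
  have : p.support.sup (fun s => m.toSyn s) = m.toSyn d :=
    le_antisymm (Finset.sup_le fun e he => h e (MvPolynomial.mem_support_iff.1 he))
      (Finset.le_sup (MvPolynomial.mem_support_iff.2 hd))
  rw [mdeg, this, AddEquiv.symm_apply_apply]

lemma ne_zero_of_coeff {σ R : Type*} [CommSemiring R] {p : MvPolynomial σ R} {d : σ →₀ ℕ}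
    (h : MvPolynomial.coeff d p ≠ 0) : p ≠ 0 :=
  fun h0 => h (by rw [h0, coeff_zero])

-- ## Lexicographic facts on `Fin 3 →₀ ℕ`

lemma toSyn_lex (e : Fin 3 →₀ ℕ) : m3.toSyn e = toLex e := rfl

lemma lex_single_lt {i j : Fin 3} (h : j < i) {n k : ℕ} (hk : 0 < k) :
    m3.toSyn (Finsupp.single i n) < m3.toSyn (Finsupp.single j k) := by
  show toLex (Finsupp.single i n) < toLex (Finsupp.single j k)
  rw [Finsupp.Lex.lt_iff]
  refine ⟨j, fun l hl => ?_, ?_⟩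
  · show Finsupp.single i n l = Finsupp.single j k l
    rw [Finsupp.single_apply, Finsupp.single_apply, if_neg (fun e => absurd e.symm (hl.trans h).ne),
      if_neg (fun e => absurd e.symm hl.ne)]
  · show Finsupp.single i n j < Finsupp.single j k j
    rw [Finsupp.single_apply, Finsupp.single_apply, if_neg (fun e => absurd e.symm h.ne),
      if_pos rfl]
    exact hk

lemma lex_zero_le (e : Fin 3 →₀ ℕ) : m3.toSyn 0 ≤ m3.toSyn e := by
  rw [map_zero]; exact bot_le

lemma lex_le_3 {e d : Fin 3 →₀ ℕ} (h : m3.toSyn e ≤ m3.toSyn d) :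
    e 0 ≤ d 0 ∧ (e 0 = d 0 → e 1 ≤ d 1) ∧ (e 0 = d 0 → e 1 = d 1 → e 2 ≤ d 2) := by
  rw [toSyn_lex, toSyn_lex] at h
  replace h : (toLex e : Lex (Fin 3 →₀ ℕ)) ≤ toLex d := h
  rw [le_iff_eq_or_lt, Finsupp.Lex.lt_iff] at h
  rcases h with h | ⟨i, hj, hi⟩
  · have : e = d := toLex.injective h
    subst this
    exact ⟨le_rfl, fun _ => le_rfl, fun _ _ => le_rfl⟩
  · fin_cases i
    · exact ⟨hi.le, fun h0 => absurd h0 hi.ne, fun h0 _ => absurd h0 hi.ne⟩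
    · have h0 : e 0 = d 0 := hj 0 (by decide)
      exact ⟨h0.le, fun _ => hi.le, fun _ h1 => absurd h1 hi.ne⟩
    · have h0 : e 0 = d 0 := hj 0 (by decide)
      have h1 : e 1 = d 1 := hj 1 (by decide)
      exact ⟨h0.le, fun _ => h1.le, fun _ _ => hi.le⟩

lemma s21_ne_s11 : Finsupp.single (2 : Fin 3) 1 ≠ Finsupp.single (1 : Fin 3) 1 := by
  rw [Ne, Finsupp.single_eq_single_iff]; decide
lemma s21_ne_s01 : Finsupp.single (2 : Fin 3) 1 ≠ Finsupp.single (0 : Fin 3) 1 := by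
  rw [Ne, Finsupp.single_eq_single_iff]; decide
lemma s11_ne_s01 : Finsupp.single (1 : Fin 3) 1 ≠ Finsupp.single (0 : Fin 3) 1 := by
  rw [Ne, Finsupp.single_eq_single_iff]; decide
lemma z_ne_s21 : (0 : Fin 3 →₀ ℕ) ≠ Finsupp.single (2 : Fin 3) 1 := by
  intro h; have : (0 : Fin 3 →₀ ℕ) 2 = Finsupp.single (2 : Fin 3) 1 2 := by rw [h]
  simp at this
lemma z_ne_s11 : (0 : Fin 3 →₀ ℕ) ≠ Finsupp.single (1 : Fin 3) 1 := by
  intro h; have : (0 : Fin 3 →₀ ℕ) 1 = Finsupp.single (1 : Fin 3) 1 1 := by rw [h]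
  simp at this
lemma z_ne_s01 : (0 : Fin 3 →₀ ℕ) ≠ Finsupp.single (0 : Fin 3) 1 := by
  intro h; have : (0 : Fin 3 →₀ ℕ) 0 = Finsupp.single (0 : Fin 3) 1 0 := by rw [h]
  simp at this

-- ## `mdeg` of the concrete specialized polynomials

section ConcreteMdeg
variable {L : Type*} [CommRing L] [Nontrivial L]

set_option linter.unusedSectionVars false

lemma mdeg_A {a : L} (ha : a ≠ 0) :
    mdeg m3 (C a * X 1 + X 2 : MvPolynomial (Fin 3) L) = Finsupp.single 1 1 ∧
      (C a * X 1 + X 2 : MvPolynomial (Fin 3) L) ≠ 0 := by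
  classical
  have hc : coeff (Finsupp.single 1 1) (C a * X 1 + X 2 : MvPolynomial (Fin 3) L) = a := by
    rw [coeff_add, coeff_C_mul, coeff_X', coeff_X', if_pos rfl,
      if_neg s21_ne_s11, mul_one, add_zero]
  have hc' := hc ▸ ha
  refine ⟨mdeg_eq_of_max m3 hc' (fun e he => ?_), ne_zero_of_coeff hc'⟩
  by_cases h1 : e = Finsupp.single 1 1
  · subst h1; exact le_rfl
  by_cases h2 : e = Finsupp.single 2 1
  · subst h2; exact (lex_single_lt (by decide) one_pos).le
  exfalso; apply he
  rw [coeff_add, coeff_C_mul, coeff_X', coeff_X', if_neg (fun h => h1 h.symm),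
    if_neg (fun h => h2 h.symm), mul_zero, add_zero]

lemma mdeg_B {b : L} (hb : b ≠ 0) :
    mdeg m3 (C b * X 0 + X 2 + 1 : MvPolynomial (Fin 3) L) = Finsupp.single 0 1 ∧
      (C b * X 0 + X 2 + 1 : MvPolynomial (Fin 3) L) ≠ 0 := by
  classical
  have hc : coeff (Finsupp.single 0 1) (C b * X 0 + X 2 + 1 : MvPolynomial (Fin 3) L) = b := by
    rw [coeff_add, coeff_add, coeff_C_mul, coeff_X', coeff_X', coeff_one, if_pos rfl,
      if_neg s21_ne_s01, if_neg z_ne_s01, mul_one, add_zero, add_zero]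
  have hc' := hc ▸ hb
  refine ⟨mdeg_eq_of_max m3 hc' (fun e he => ?_), ne_zero_of_coeff hc'⟩
  by_cases h0 : e = Finsupp.single 0 1
  · subst h0; exact le_rfl
  by_cases h2 : e = Finsupp.single 2 1
  · subst h2; exact (lex_single_lt (by decide) one_pos).le
  by_cases hz : e = 0
  · subst hz; exact lex_zero_le _
  exfalso; apply he
  rw [coeff_add, coeff_add, coeff_C_mul, coeff_X', coeff_X', coeff_one,
    if_neg (fun h => h0 h.symm), if_neg (fun h => h2 h.symm), if_neg (fun h => hz h.symm),
    mul_zero, add_zero, add_zero]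

lemma mdeg_Cx :
    mdeg m3 (X 2 + 1 : MvPolynomial (Fin 3) L) = Finsupp.single 2 1 ∧
      (X 2 + 1 : MvPolynomial (Fin 3) L) ≠ 0 := by
  classical
  have hc : coeff (Finsupp.single 2 1) (X 2 + 1 : MvPolynomial (Fin 3) L) = 1 := by
    rw [coeff_add, coeff_X', coeff_one, if_pos rfl, if_neg z_ne_s21, add_zero]
  have hc' : coeff (Finsupp.single 2 1) (X 2 + 1 : MvPolynomial (Fin 3) L) ≠ 0 := by
    rw [hc]; exact one_ne_zero
  refine ⟨mdeg_eq_of_max m3 hc' (fun e he => ?_), ne_zero_of_coeff hc'⟩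
  by_cases h2 : e = Finsupp.single 2 1
  · subst h2; exact le_rfl
  by_cases hz : e = 0
  · subst hz; exact lex_zero_le _
  exfalso; apply he
  rw [coeff_add, coeff_X', coeff_one, if_neg (fun h => h2 h.symm), if_neg (fun h => hz h.symm),
    add_zero]

lemma mdeg_D :
    mdeg m3 (X 2 : MvPolynomial (Fin 3) L) = Finsupp.single 2 1 ∧
      (X 2 : MvPolynomial (Fin 3) L) ≠ 0 := by
  classical
  have hc : coeff (Finsupp.single 2 1) (X 2 : MvPolynomial (Fin 3) L) = 1 := by
    rw [coeff_X', if_pos rfl]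
  have hc' : coeff (Finsupp.single 2 1) (X 2 : MvPolynomial (Fin 3) L) ≠ 0 := by
    rw [hc]; exact one_ne_zero
  refine ⟨mdeg_eq_of_max m3 hc' (fun e he => ?_), ne_zero_of_coeff hc'⟩
  by_cases h2 : e = Finsupp.single 2 1
  · subst h2; exact le_rfl
  exfalso; apply he
  rw [coeff_X', if_neg (fun h => h2 h.symm)]

lemma mdeg_E : mdeg m3 (1 : MvPolynomial (Fin 3) L) = 0 := by
  classical
  have hc : coeff (0 : Fin 3 →₀ ℕ) (1 : MvPolynomial (Fin 3) L) ≠ 0 := by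
    rw [coeff_one, if_pos rfl]; exact one_ne_zero
  refine mdeg_eq_of_max m3 hc (fun e he => ?_)
  by_cases hz : e = 0
  · subst hz; exact le_rfl
  exfalso; apply he
  rw [coeff_one, if_neg (fun h => hz h.symm)]

lemma mdeg_F {a b : L} (hb : b ≠ 0) :
    mdeg m3 (C b * X 0 - C a * X 1 + 1 : MvPolynomial (Fin 3) L) = Finsupp.single 0 1 ∧
      (C b * X 0 - C a * X 1 + 1 : MvPolynomial (Fin 3) L) ≠ 0 := by
  classical
  have hc : coeff (Finsupp.single 0 1) (C b * X 0 - C a * X 1 + 1 : MvPolynomial (Fin 3) L) = b := by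
    rw [coeff_add, coeff_sub, coeff_C_mul, coeff_C_mul, coeff_X', coeff_X', coeff_one,
      if_pos rfl, if_neg s11_ne_s01, if_neg z_ne_s01,
      mul_one, mul_zero, sub_zero, add_zero]
  have hc' := hc ▸ hb
  refine ⟨mdeg_eq_of_max m3 hc' (fun e he => ?_), ne_zero_of_coeff hc'⟩
  by_cases h0 : e = Finsupp.single 0 1
  · subst h0; exact le_rfl
  by_cases h1 : e = Finsupp.single 1 1
  · subst h1; exact (lex_single_lt (by decide) one_pos).le
  by_cases hz : e = 0
  · subst hz; exact lex_zero_le _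
  exfalso; apply he
  rw [coeff_add, coeff_sub, coeff_C_mul, coeff_C_mul, coeff_X', coeff_X', coeff_one,
    if_neg (fun h => h0 h.symm), if_neg (fun h => h1 h.symm), if_neg (fun h => hz h.symm),
    mul_zero, mul_zero, sub_zero, add_zero]

lemma mdeg_G {a : L} (ha : a ≠ 0) :
    mdeg m3 (C (0 : L) * X 0 - C a * X 1 + 1 : MvPolynomial (Fin 3) L) = Finsupp.single 1 1 ∧
      (C (0 : L) * X 0 - C a * X 1 + 1 : MvPolynomial (Fin 3) L) ≠ 0 := by
  classical
  have hc : coeff (Finsupp.single 1 1) (C (0:L) * X 0 - C a * X 1 + 1 : MvPolynomial (Fin 3) L)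
      = -a := by
    rw [coeff_add, coeff_sub, coeff_C_mul, coeff_C_mul, coeff_X', coeff_X', coeff_one,
      if_pos rfl, if_neg s11_ne_s01.symm, if_neg z_ne_s11]
    ring
  have hc' : coeff (Finsupp.single 1 1) (C (0:L) * X 0 - C a * X 1 + 1 : MvPolynomial (Fin 3) L)
      ≠ 0 := by rw [hc]; exact neg_ne_zero.2 ha
  refine ⟨mdeg_eq_of_max m3 hc' (fun e he => ?_), ne_zero_of_coeff hc'⟩
  by_cases h1 : e = Finsupp.single 1 1
  · subst h1; exact le_rfl
  by_cases h0 : e = Finsupp.single 0 1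
  · exfalso; apply he; subst h0
    rw [coeff_add, coeff_sub, coeff_C_mul, coeff_C_mul, coeff_X', coeff_X', coeff_one,
      if_pos rfl, if_neg s11_ne_s01, if_neg z_ne_s01]
    ring
  by_cases hz : e = 0
  · subst hz; exact lex_zero_le _
  exfalso; apply he
  rw [coeff_add, coeff_sub, coeff_C_mul, coeff_C_mul, coeff_X', coeff_X', coeff_one,
    if_neg (fun h => h0 h.symm), if_neg (fun h => h1 h.symm), if_neg (fun h => hz h.symm)]
  ring

end ConcreteMdeg

-- ## The `φ`-contradiction machinery

section Phi
variable {L : Type*} [Field L]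

lemma monomial_eq3 (e : Fin 3 →₀ ℕ) (c : L) :
    (monomial e c : MvPolynomial (Fin 3) L) = C c * (X 0 ^ e 0 * X 1 ^ e 1 * X 2 ^ e 2) := by
  rw [monomial_eq, Finsupp.prod_fintype _ _ (fun i => pow_zero _), Fin.prod_univ_three]

lemma coeff_C_mul_Xpow (i : Fin 3) (n : ℕ) (c : L) (d : Fin 3 →₀ ℕ) :
    coeff d (C c * X i ^ n : MvPolynomial (Fin 3) L) = if Finsupp.single i n = d then c else 0 := by
  classical
  rw [X_pow_eq_monomial, C_mul_monomial, mul_one, coeff_monomial]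

lemma phi_contra (t : Fin 3 → MvPolynomial (Fin 3) L)
    {p : MvPolynomial (Fin 3) L} (hp : p ≠ 0) (h0 : aeval t p = 0)
    (hmon : ∀ e ∈ p.support, coeff (mdeg m3 p) (aeval t (monomial e (coeff e p)))
            = if e = mdeg m3 p then coeff e p else 0) : False := by
  classical
  have hd : coeff (mdeg m3 p) p ≠ 0 := coeff_mdeg_ne_zero m3 hp
  have hds : mdeg m3 p ∈ p.support := MvPolynomial.mem_support_iff.2 hd
  set d := mdeg m3 p with hddef
  have : coeff d (aeval t p) = coeff d p := by
    conv_lhs => rw [p.as_sum]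
    rw [map_sum, coeff_sum, Finset.sum_congr rfl hmon, Finset.sum_ite_eq' p.support d
      (fun e => coeff e p), if_pos hds]
  rw [h0, coeff_zero] at this
  exact hd this.symm

lemma case1 {a b : L} (ha : a ≠ 0) (hb : b ≠ 0) {p : MvPolynomial (Fin 3) L} (hp : p ≠ 0)
    (hmem : p ∈ Ideal.span {(C a * X 1 + X 2 : MvPolynomial (Fin 3) L), C b * X 0 + X 2 + 1})
    (h0 : (mdeg m3 p) 0 = 0) (h1 : (mdeg m3 p) 1 = 0) : False := by
  classical
  set t : Fin 3 → MvPolynomial (Fin 3) L :=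
    ![-(C b⁻¹ * (X 2 + 1)), -(C a⁻¹ * X 2), X 2] with ht
  have hca : (C a : MvPolynomial (Fin 3) L) * C a⁻¹ = 1 := by
    rw [← C_mul, mul_inv_cancel₀ ha, C_1]
  have hcb : (C b : MvPolynomial (Fin 3) L) * C b⁻¹ = 1 := by
    rw [← C_mul, mul_inv_cancel₀ hb, C_1]
  have ht0 : t 0 = -(C b⁻¹ * (X 2 + 1)) := rfl
  have ht1 : t 1 = -(C a⁻¹ * X 2) := rfl
  have ht2 : t 2 = X 2 := rfl
  have hf0 : aeval t (C a * X 1 + X 2 : MvPolynomial (Fin 3) L) = 0 := by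
    rw [map_add, map_mul, aeval_C, aeval_X, aeval_X, ht1, ht2, algebraMap_eq]
    linear_combination (-(X 2 : MvPolynomial (Fin 3) L)) * hca
  have hg0 : aeval t (C b * X 0 + X 2 + 1 : MvPolynomial (Fin 3) L) = 0 := by
    rw [map_add, map_add, map_mul, aeval_C, aeval_X, aeval_X, map_one, ht0, ht2, algebraMap_eq]
    linear_combination (-(X 2 : MvPolynomial (Fin 3) L) - 1) * hcb
  obtain ⟨r, s, hrs⟩ := Ideal.mem_span_pair.1 hmem
  have hp0 : aeval t p = 0 := by
    rw [← hrs, map_add, map_mul, map_mul, hf0, hg0, mul_zero, mul_zero, add_zero]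
  refine phi_contra t hp hp0 (fun e he => ?_)
  have hle := lex_le_3 (le_mdeg m3 (MvPolynomial.mem_support_iff.1 he))
  have he0 : e 0 = 0 := le_antisymm (h0 ▸ hle.1) (Nat.zero_le _)
  have he1 : e 1 = 0 := le_antisymm (hle.2.1 (by rw [he0, h0]) |>.trans_eq h1) (Nat.zero_le _)
  have hes : Finsupp.single 2 (e 2) = e := by
    ext i
    fin_cases i
    · simpa using he0.symm
    · simpa using he1.symm
    · simp
  rw [monomial_eq3, map_mul, map_mul, map_mul, map_pow, map_pow, map_pow, aeval_X, aeval_X,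
    aeval_X, aeval_C, algebraMap_eq, ht0, ht1, ht2, he0, he1, pow_zero, pow_zero, one_mul,
    one_mul, X_pow_eq_monomial, C_mul_monomial, mul_one, coeff_monomial, hes]

lemma case2 {a : L} (ha : a ≠ 0) {p : MvPolynomial (Fin 3) L} (hp : p ≠ 0)
    (hmem : p ∈ Ideal.span {(C a * X 1 + X 2 : MvPolynomial (Fin 3) L),
      C (0 : L) * X 0 + X 2 + 1})
    (h1 : (mdeg m3 p) 1 = 0) (h2 : (mdeg m3 p) 2 = 0) : False := by
  classical
  set t : Fin 3 → MvPolynomial (Fin 3) L := ![X 0, C a⁻¹, -1] with ht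
  have hca : (C a : MvPolynomial (Fin 3) L) * C a⁻¹ = 1 := by
    rw [← C_mul, mul_inv_cancel₀ ha, C_1]
  have ht0 : t 0 = X 0 := rfl
  have ht1 : t 1 = C a⁻¹ := rfl
  have ht2 : t 2 = -1 := rfl
  have hf0 : aeval t (C a * X 1 + X 2 : MvPolynomial (Fin 3) L) = 0 := by
    rw [map_add, map_mul, aeval_C, aeval_X, aeval_X, ht1, ht2, algebraMap_eq]
    linear_combination hca
  have hg0 : aeval t (C (0:L) * X 0 + X 2 + 1 : MvPolynomial (Fin 3) L) = 0 := by
    rw [map_add, map_add, map_mul, aeval_C, aeval_X, aeval_X, map_one, ht0, ht2, algebraMap_eq,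
      map_zero]
    ring
  obtain ⟨r, s, hrs⟩ := Ideal.mem_span_pair.1 hmem
  have hp0 : aeval t p = 0 := by
    rw [← hrs, map_add, map_mul, map_mul, hf0, hg0, mul_zero, mul_zero, add_zero]
  refine phi_contra t hp hp0 (fun e he => ?_)
  have hle := lex_le_3 (le_mdeg m3 (MvPolynomial.mem_support_iff.1 he))
  have hm1 : ((-1 : MvPolynomial (Fin 3) L)) = C (-1) := by rw [map_neg, map_one]
  have key : aeval t (monomial e (coeff e p))
      = C (coeff e p * a⁻¹ ^ e 1 * (-1) ^ e 2) * X 0 ^ e 0 := by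
    rw [monomial_eq3, map_mul, map_mul, map_mul, map_pow, map_pow, map_pow, aeval_X, aeval_X,
      aeval_X, aeval_C, algebraMap_eq, ht0, ht1, ht2, ← C_pow, hm1, ← C_pow, C_mul, C_mul]
    ring
  rw [key, coeff_C_mul_Xpow]
  by_cases heq : e = mdeg m3 p
  · have he1 : e 1 = 0 := by rw [heq]; exact h1
    have he2 : e 2 = 0 := by rw [heq]; exact h2
    have hes : Finsupp.single (0 : Fin 3) (e 0) = e := by
      ext i
      fin_cases i
      · simp
      · simpa using he1.symm
      · simpa using he2.symm
    rw [he1, he2, pow_zero, pow_zero, mul_one, mul_one, hes, if_pos heq]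
  · rw [if_neg heq, if_neg]
    intro hsd
    apply heq
    have he0 : e 0 = mdeg m3 p 0 := by
      have := congrArg (fun (w : Fin 3 →₀ ℕ) => w 0) hsd
      simpa using this
    have he1 : e 1 = 0 := le_antisymm ((hle.2.1 he0).trans_eq h1) (Nat.zero_le _)
    have he2 : e 2 = 0 := le_antisymm ((hle.2.2 he0 (by rw [he1, h1])).trans_eq h2) (Nat.zero_le _)
    rw [← hsd]
    ext i
    fin_cases i
    · simp
    · simpa using he1
    · simpa using he2

lemma case3 {b : L} (hb : b ≠ 0) {p : MvPolynomial (Fin 3) L} (hp : p ≠ 0)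
    (hmem : p ∈ Ideal.span {(C (0 : L) * X 1 + X 2 : MvPolynomial (Fin 3) L),
      C b * X 0 + X 2 + 1})
    (h0 : (mdeg m3 p) 0 = 0) (h2 : (mdeg m3 p) 2 = 0) : False := by
  classical
  set t : Fin 3 → MvPolynomial (Fin 3) L := ![C (-b⁻¹), X 1, 0] with ht
  have hcb : (C b : MvPolynomial (Fin 3) L) * C b⁻¹ = 1 := by
    rw [← C_mul, mul_inv_cancel₀ hb, C_1]
  have ht0 : t 0 = C (-b⁻¹) := rfl
  have ht1 : t 1 = X 1 := rfl
  have ht2 : t 2 = 0 := rfl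
  have hf0 : aeval t (C (0:L) * X 1 + X 2 : MvPolynomial (Fin 3) L) = 0 := by
    rw [map_add, map_mul, aeval_C, aeval_X, aeval_X, ht1, ht2, algebraMap_eq, map_zero]
    ring
  have hg0 : aeval t (C b * X 0 + X 2 + 1 : MvPolynomial (Fin 3) L) = 0 := by
    rw [map_add, map_add, map_mul, aeval_C, aeval_X, aeval_X, map_one, ht0, ht2, algebraMap_eq,
      map_neg]
    linear_combination -hcb
  obtain ⟨r, s, hrs⟩ := Ideal.mem_span_pair.1 hmem
  have hp0 : aeval t p = 0 := by
    rw [← hrs, map_add, map_mul, map_mul, hf0, hg0, mul_zero, mul_zero, add_zero]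
  refine phi_contra t hp hp0 (fun e he => ?_)
  have hle := lex_le_3 (le_mdeg m3 (MvPolynomial.mem_support_iff.1 he))
  have he0 : e 0 = 0 := le_antisymm (h0 ▸ hle.1) (Nat.zero_le _)
  by_cases he2 : e 2 = 0
  · have key : aeval t (monomial e (coeff e p)) = C (coeff e p) * X 1 ^ e 1 := by
      rw [monomial_eq3, map_mul, map_mul, map_mul, map_pow, map_pow, map_pow, aeval_X, aeval_X,
        aeval_X, aeval_C, algebraMap_eq, ht0, ht1, ht2, he0, he2, pow_zero, pow_zero, one_mul,
        mul_one]
    rw [key, coeff_C_mul_Xpow]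
    by_cases heq : e = mdeg m3 p
    · have hes : Finsupp.single (1 : Fin 3) (e 1) = e := by
        ext i
        fin_cases i
        · simpa using he0.symm
        · simp
        · simpa using he2.symm
      rw [hes, if_pos heq]
    · rw [if_neg heq, if_neg]
      intro hsd
      apply heq
      rw [← hsd]
      ext i
      fin_cases i
      · simpa using he0
      · simp
      · simpa using he2
  · have key : aeval t (monomial e (coeff e p)) = 0 := by
      rw [monomial_eq3, map_mul, map_mul, map_mul, map_pow, map_pow, map_pow, aeval_X, aeval_X,
        aeval_X, aeval_C, algebraMap_eq, ht0, ht1, ht2, zero_pow he2]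
      ring
    rw [key, coeff_zero, if_neg]
    intro heq
    exact he2 (by rw [heq]; exact h2)

end Phi

-- ## Specialization computations

section Spec
set_option synthInstance.maxHeartbeats 1000000
variable {K L : Type*} [Field K] [Field L] [Algebra K L]

lemma spec_f (v : Fin 2 → L) :
    paramSpec (L := L) v (f K) = C (v 0) * X 1 + X 2 := by
  simp [f, paramSpec]

lemma spec_g (v : Fin 2 → L) :
    paramSpec (L := L) v (g K) = C (v 1) * X 0 + X 2 + 1 := by
  simp [g, paramSpec]

lemma spec_h (v : Fin 2 → L) :
    paramSpec (L := L) v (h K) = C (v 1) * X 0 - C (v 0) * X 1 + 1 := by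
  simp [h, paramSpec]

set_option synthInstance.maxHeartbeats 20000
lemma h_eq : h K = g K - f K := by
  rw [h, g, f]; ring

lemma f_mem : f K ∈ I K := Ideal.subset_span (by simp)
lemma g_mem : g K ∈ I K := Ideal.subset_span (by simp)
lemma h_mem : h K ∈ I K := by rw [h_eq]; exact sub_mem g_mem f_mem

lemma map_I (v : Fin 2 → L) :
    (I K).map (paramSpec (L := L) v)
      = Ideal.span {(C (v 0) * X 1 + X 2 : MvPolynomial (Fin 3) L),
          C (v 1) * X 0 + X 2 + 1} := by
  rw [I, Ideal.map_span, Set.image_pair, spec_f, spec_g]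

end Spec

-- ## `{f, g, h}` is a CGB

section Main
variable {K L : Type*} [Field K] [Field L] [Algebra K L]

lemma fgh_CGB : IsCGB L m3 (I K) {f K, g K, h K} := by
  refine ⟨Set.toFinite _, ?_, fun v => ⟨?_, ?_⟩⟩
  · intro w hw
    simp only [Set.mem_insert_iff, Set.mem_singleton_iff] at hw
    rcases hw with rfl | rfl | rfl
    exacts [f_mem, g_mem, h_mem]
  · rintro q ⟨w, hw, rfl⟩
    simp only [Set.mem_insert_iff, Set.mem_singleton_iff] at hw
    apply Ideal.mem_map_of_mem
    rcases hw with rfl | rfl | rfl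
    exacts [f_mem, g_mem, h_mem]
  · intro p hpJ hp0
    rw [map_I] at hpJ
    by_cases hb : v 1 = 0
    · by_cases ha : v 0 = 0
      · have hh1 : paramSpec (L := L) v (h K) = 1 := by
          rw [spec_h, ha, hb, C_0, zero_mul, zero_mul, sub_zero, zero_add]
        refine ⟨paramSpec (L := L) v (h K), ⟨h K, by simp, rfl⟩, ?_, ?_⟩
        · rw [hh1]; exact one_ne_zero
        · rw [hh1, mdeg_E]
          exact Finsupp.le_def.2 fun i => Nat.zero_le _
      · rcases Nat.eq_zero_or_pos ((mdeg m3 p) 1) with h1 | h1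
        · rcases Nat.eq_zero_or_pos ((mdeg m3 p) 2) with h2 | h2
          · exact (case2 ha hp0 (by rwa [hb] at hpJ) h1 h2).elim
          · have hgX : paramSpec (L := L) v (g K) = X 2 + 1 := by
              rw [spec_g, hb, C_0, zero_mul, zero_add]
            refine ⟨paramSpec (L := L) v (g K), ⟨g K, by simp, rfl⟩, ?_, ?_⟩
            · rw [hgX]; exact mdeg_Cx.2
            · rw [hgX, mdeg_Cx.1]; exact Finsupp.single_le_iff.2 h2
        · refine ⟨paramSpec (L := L) v (f K), ⟨f K, by simp, rfl⟩, ?_, ?_⟩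
          · rw [spec_f]; exact (mdeg_A ha).2
          · rw [spec_f, (mdeg_A ha).1]; exact Finsupp.single_le_iff.2 h1
    · rcases Nat.eq_zero_or_pos ((mdeg m3 p) 0) with h0 | h0
      · by_cases ha : v 0 = 0
        · rcases Nat.eq_zero_or_pos ((mdeg m3 p) 2) with h2 | h2
          · exact (case3 hb hp0 (by rwa [ha] at hpJ) h0 h2).elim
          · have hfX : paramSpec (L := L) v (f K) = X 2 := by
              rw [spec_f, ha, C_0, zero_mul, zero_add]
            refine ⟨paramSpec (L := L) v (f K), ⟨f K, by simp, rfl⟩, ?_, ?_⟩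
            · rw [hfX]; exact mdeg_D.2
            · rw [hfX, mdeg_D.1]; exact Finsupp.single_le_iff.2 h2
        · rcases Nat.eq_zero_or_pos ((mdeg m3 p) 1) with h1 | h1
          · exact (case1 ha hb hp0 hpJ h0 h1).elim
          · refine ⟨paramSpec (L := L) v (f K), ⟨f K, by simp, rfl⟩, ?_, ?_⟩
            · rw [spec_f]; exact (mdeg_A ha).2
            · rw [spec_f, (mdeg_A ha).1]; exact Finsupp.single_le_iff.2 h1
      · refine ⟨paramSpec (L := L) v (g K), ⟨g K, by simp, rfl⟩, ?_, ?_⟩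
        · rw [spec_g]; exact (mdeg_B hb).2
        · rw [spec_g, (mdeg_B hb).1]; exact Finsupp.single_le_iff.2 h0

-- ## Missing-element counterexamples

lemma notCGB_missing_g {G' : Set (MvPolynomial (Fin 3) (MvPolynomial (Fin 2) K))}
    (hsub : G' ⊆ {f K, g K, h K}) (hg : g K ∉ G') : ¬ IsCGB L m3 (I K) G' := by
  rintro ⟨-, -, hGB⟩
  obtain ⟨-, hdiv⟩ := hGB ![1, 0]
  have hv0 : (![1, 0] : Fin 2 → L) 0 = 1 := rfl
  have hv1 : (![1, 0] : Fin 2 → L) 1 = 0 := rfl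
  have hσg : paramSpec (L := L) ![1, 0] (g K) = X 2 + 1 := by
    rw [spec_g, hv1, C_0, zero_mul, zero_add]
  obtain ⟨q, ⟨w, hw, rfl⟩, hq0, hqle⟩ := hdiv (paramSpec (L := L) ![1, 0] (g K))
    (Ideal.mem_map_of_mem _ g_mem) (by rw [hσg]; exact mdeg_Cx.2)
  rw [hσg, mdeg_Cx.1] at hqle
  have hw3 := hsub hw
  have hwg : w ≠ g K := fun e => hg (e ▸ hw)
  simp only [Set.mem_insert_iff, Set.mem_singleton_iff] at hw3
  have hle' : mdeg m3 (paramSpec (L := L) ![1, 0] w) = Finsupp.single 1 1 := by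
    rcases hw3 with rfl | rfl | rfl
    · rw [spec_f, hv0]; exact (mdeg_A one_ne_zero).1
    · exact absurd rfl hwg
    · rw [spec_h, hv0, hv1]; exact (mdeg_G one_ne_zero).1
  rw [hle'] at hqle
  have := Finsupp.single_le_iff.1 hqle
  simp [Finsupp.single_apply] at this

lemma notCGB_missing_f {G' : Set (MvPolynomial (Fin 3) (MvPolynomial (Fin 2) K))}
    (hsub : G' ⊆ {f K, g K, h K}) (hf : f K ∉ G') : ¬ IsCGB L m3 (I K) G' := by
  rintro ⟨-, -, hGB⟩
  obtain ⟨-, hdiv⟩ := hGB ![0, 1]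
  have hv0 : (![0, 1] : Fin 2 → L) 0 = 0 := rfl
  have hv1 : (![0, 1] : Fin 2 → L) 1 = 1 := rfl
  have hσf : paramSpec (L := L) ![0, 1] (f K) = X 2 := by
    rw [spec_f, hv0, C_0, zero_mul, zero_add]
  obtain ⟨q, ⟨w, hw, rfl⟩, hq0, hqle⟩ := hdiv (paramSpec (L := L) ![0, 1] (f K))
    (Ideal.mem_map_of_mem _ f_mem) (by rw [hσf]; exact mdeg_D.2)
  rw [hσf, mdeg_D.1] at hqle
  have hw3 := hsub hw
  have hwf : w ≠ f K := fun e => hf (e ▸ hw)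
  simp only [Set.mem_insert_iff, Set.mem_singleton_iff] at hw3
  have hle' : mdeg m3 (paramSpec (L := L) ![0, 1] w) = Finsupp.single 0 1 := by
    rcases hw3 with rfl | rfl | rfl
    · exact absurd rfl hwf
    · rw [spec_g, hv1]; exact (mdeg_B one_ne_zero).1
    · rw [spec_h, hv0, hv1]; exact (mdeg_F one_ne_zero).1
  rw [hle'] at hqle
  have := Finsupp.single_le_iff.1 hqle
  simp [Finsupp.single_apply] at this

lemma notCGB_missing_h {G' : Set (MvPolynomial (Fin 3) (MvPolynomial (Fin 2) K))}
    (hsub : G' ⊆ {f K, g K, h K}) (hh : h K ∉ G') : ¬ IsCGB L m3 (I K) G' := by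
  rintro ⟨-, -, hGB⟩
  obtain ⟨-, hdiv⟩ := hGB ![0, 0]
  have hv0 : (![0, 0] : Fin 2 → L) 0 = 0 := rfl
  have hv1 : (![0, 0] : Fin 2 → L) 1 = 0 := rfl
  have hσh : paramSpec (L := L) ![0, 0] (h K) = 1 := by
    rw [spec_h, hv0, hv1, C_0, zero_mul, zero_mul, sub_zero, zero_add]
  obtain ⟨q, ⟨w, hw, rfl⟩, hq0, hqle⟩ := hdiv (paramSpec (L := L) ![0, 0] (h K))
    (Ideal.mem_map_of_mem _ h_mem) (by rw [hσh]; exact one_ne_zero)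
  rw [hσh, mdeg_E] at hqle
  have hw3 := hsub hw
  have hwh : w ≠ h K := fun e => hh (e ▸ hw)
  simp only [Set.mem_insert_iff, Set.mem_singleton_iff] at hw3
  have hle' : mdeg m3 (paramSpec (L := L) ![0, 0] w) = Finsupp.single 2 1 := by
    rcases hw3 with rfl | rfl | rfl
    · rw [spec_f, hv0, C_0, zero_mul, zero_add]; exact mdeg_D.1
    · rw [spec_g, hv1, C_0, zero_mul, zero_add]; exact mdeg_Cx.1
    · exact absurd rfl hwh
  rw [hle'] at hqle
  have := Finsupp.single_le_iff.1 hqle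
  simp at this

lemma g_ne_f : g K ≠ f K := by
  intro e
  have h2 := congrArg (constantCoeff (R := MvPolynomial (Fin 2) K) (σ := Fin 3)) e
  rw [g, f] at h2
  simp [map_add, map_mul, constantCoeff_X, constantCoeff_C] at h2

lemma g_ne_h : g K ≠ h K := by
  intro e
  have h2 := congrArg (MvPolynomial.coeff (Finsupp.single (2 : Fin 3) 1)) e
  rw [g, h] at h2
  classical
  simp only [coeff_add, coeff_sub, coeff_C_mul, coeff_X', coeff_one] at h2
  rw [if_neg s21_ne_s01.symm, if_neg s21_ne_s11.symm, if_neg z_ne_s21] at h2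
  simp at h2

end Main
end Helpers

open Weispfenning in
/-- At `u ↦ 1, v ↦ 0`, `σ(g) = x + 1` has leading monomial `x`, while `σ(f)` and `σ(h)`
have leading monomial `y`, which does not divide `x`; hence `{f, h}` is not a CGB of `I`,
so `g` is essential in the CGB `{f, g, h}`; combined with the essentiality of `f` and `h`,
`{f, g, h}` is a minimal CGB of `I` (no proper subset is a CGB). -/
theorem weispfenning_fh_not_CGB_and_fgh_minimal
    {K L : Type*} [Field K] [Field L] [Algebra K L] [IsAlgClosed L] :
    paramSpec (L := L) (![1, 0] : Fin 2 → L) (g K) ∈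
        (I K).map (paramSpec (L := L) (![1, 0] : Fin 2 → L)) ∧
    paramSpec (L := L) (![1, 0] : Fin 2 → L) (g K) ≠ 0 ∧
    mdeg m3 (paramSpec (L := L) (![1, 0] : Fin 2 → L) (g K)) =
      Finsupp.single (2 : Fin 3) 1 ∧
    mdeg m3 (paramSpec (L := L) (![1, 0] : Fin 2 → L) (f K)) =
      Finsupp.single (1 : Fin 3) 1 ∧
    mdeg m3 (paramSpec (L := L) (![1, 0] : Fin 2 → L) (h K)) =
      Finsupp.single (1 : Fin 3) 1 ∧
    ¬ (Finsupp.single (1 : Fin 3) 1 ≤ Finsupp.single (2 : Fin 3) 1) ∧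
    ¬ IsCGB L m3 (I K) {f K, h K} ∧
    (IsCGB L m3 (I K) {f K, g K, h K} ∧
      ∀ G' ⊂ ({f K, g K, h K} : Set (MvPolynomial (Fin 3) (MvPolynomial (Fin 2) K))),
        ¬ IsCGB L m3 (I K) G') := by
  classical
  have hv0 : (![1, 0] : Fin 2 → L) 0 = 1 := rfl
  have hv1 : (![1, 0] : Fin 2 → L) 1 = 0 := rfl
  have hσg : paramSpec (L := L) ![1, 0] (g K) = X 2 + 1 := by
    rw [spec_g, hv1, C_0, zero_mul, zero_add]
  have hσf : paramSpec (L := L) ![1, 0] (f K) = C (1 : L) * X 1 + X 2 := by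
    rw [spec_f, hv0]
  have hσh : paramSpec (L := L) ![1, 0] (h K) = C (0 : L) * X 0 - C (1 : L) * X 1 + 1 := by
    rw [spec_h, hv0, hv1]
  refine ⟨Ideal.mem_map_of_mem _ g_mem, by rw [hσg]; exact mdeg_Cx.2,
    by rw [hσg]; exact mdeg_Cx.1, by rw [hσf]; exact (mdeg_A one_ne_zero).1,
    by rw [hσh]; exact (mdeg_G one_ne_zero).1, ?_, ?_, fgh_CGB, fun G' hG' => ?_⟩
  · intro hle
    have := Finsupp.single_le_iff.1 hle
    simp [Finsupp.single_apply] at this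
  · apply notCGB_missing_g (K := K) (L := L) (G' := {f K, h K})
    · intro w hw
      simp only [Set.mem_insert_iff, Set.mem_singleton_iff] at hw ⊢
      tauto
    · intro hg
      simp only [Set.mem_insert_iff, Set.mem_singleton_iff] at hg
      rcases hg with hg | hg
      exacts [g_ne_f hg, g_ne_h hg]
  · by_cases hfm : f K ∈ G'
    · by_cases hgm : g K ∈ G'
      · by_cases hhm : h K ∈ G'
        · exfalso
          apply hG'.2
          intro w hw
          simp only [Set.mem_insert_iff, Set.mem_singleton_iff] at hw
          rcases hw with rfl | rfl | rfl
          exacts [hfm, hgm, hhm]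
        · exact notCGB_missing_h hG'.1 hhm
      · exact notCGB_missing_g hG'.1 hgm
    · exact notCGB_missing_f hG'.1 hfm
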